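/- Feder–Merhav lower bound: for finite random variables (X,Y) with joint distribution p, the accuracy of the Bayes optimal classifier f*(x) = argmax_y p(y|x) satisfies P_acc(f*) = E_x[max_y p(y|x)] ≥ 2^{-H_p(Y|X)} = 2^{I_p(X;Y) - H_p(Y)}. -/

import Mathlib

open Finset

noncomputable section

namespace PaperPID

variable {Ω₁ Ω₂ Ω₃ : Type*} [Fintype Ω₁] [Fintype Ω₂] [Fintype Ω₃]

/-- Shannon entropy in bits of a finitely supported distribution given as a function. -/
def ent {α : Type*} [Fintype α] (p : α → ℝ) : ℝ := -∑ a, p a * Real.logb 2 (p a)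

/-- `p` is a probability distribution. -/
def IsProb {α : Type*} [Fintype α] (p : α → ℝ) : Prop := (∀ a, 0 ≤ p a) ∧ ∑ a, p a = 1

/-- marginal on the first coordinate -/
def m1 (p : Ω₁ × Ω₂ × Ω₃ → ℝ) : Ω₁ → ℝ := fun a => ∑ b, ∑ c, p (a, b, c)

/-- marginal on the second coordinate -/
def m2 (p : Ω₁ × Ω₂ × Ω₃ → ℝ) : Ω₂ → ℝ := fun b => ∑ a, ∑ c, p (a, b, c)

/-- marginal on the third coordinate -/
def m3 (p : Ω₁ × Ω₂ × Ω₃ → ℝ) : Ω₃ → ℝ := fun c => ∑ a, ∑ b, p (a, b, c)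

/-- marginal on coordinates (1,2) -/
def m12 (p : Ω₁ × Ω₂ × Ω₃ → ℝ) : Ω₁ × Ω₂ → ℝ := fun z => ∑ c, p (z.1, z.2, c)

/-- marginal on coordinates (1,3) -/
def m13 (p : Ω₁ × Ω₂ × Ω₃ → ℝ) : Ω₁ × Ω₃ → ℝ := fun z => ∑ b, p (z.1, b, z.2)

/-- marginal on coordinates (2,3) -/
def m23 (p : Ω₁ × Ω₂ × Ω₃ → ℝ) : Ω₂ × Ω₃ → ℝ := fun z => ∑ a, p (a, z.1, z.2)

/-- mutual information I(X₁;X₂) -/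
def I12 (p : Ω₁ × Ω₂ × Ω₃ → ℝ) : ℝ := ent (m1 p) + ent (m2 p) - ent (m12 p)

/-- mutual information I(X₁;Y) (Y the third coordinate) -/
def I13 (p : Ω₁ × Ω₂ × Ω₃ → ℝ) : ℝ := ent (m1 p) + ent (m3 p) - ent (m13 p)

/-- mutual information I(X₂;Y) -/
def I23 (p : Ω₁ × Ω₂ × Ω₃ → ℝ) : ℝ := ent (m2 p) + ent (m3 p) - ent (m23 p)

/-- joint mutual information I({X₁,X₂};Y) -/
def Ijoint (p : Ω₁ × Ω₂ × Ω₃ → ℝ) : ℝ := ent (m12 p) + ent (m3 p) - ent p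

/-- conditional mutual information I(X₁;X₂ | Y) -/
def CMI12_3 (p : Ω₁ × Ω₂ × Ω₃ → ℝ) : ℝ := ent (m13 p) + ent (m23 p) - ent p - ent (m3 p)

/-- conditional mutual information I(X₁;Y | X₂) -/
def CMI13_2 (p : Ω₁ × Ω₂ × Ω₃ → ℝ) : ℝ := ent (m12 p) + ent (m23 p) - ent p - ent (m2 p)

/-- conditional mutual information I(X₂;Y | X₁) -/
def CMI23_1 (p : Ω₁ × Ω₂ × Ω₃ → ℝ) : ℝ := ent (m12 p) + ent (m13 p) - ent p - ent (m1 p)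

/-- interaction information I(X₁;X₂;Y), defined as I(X₁;Y) - I(X₁;Y|X₂). -/
def interactionInfo (p : Ω₁ × Ω₂ × Ω₃ → ℝ) : ℝ := I13 p - CMI13_2 p

/-- Δ_{p_{1,2}}: distributions matching the (x₁,y) and (x₂,y) marginals of p. -/
def DeltaP (p : Ω₁ × Ω₂ × Ω₃ → ℝ) : Set (Ω₁ × Ω₂ × Ω₃ → ℝ) :=
  {q | IsProb q ∧ m13 q = m13 p ∧ m23 q = m23 p}

/-- Δ_{p_{1,2,12}}: distributions matching all pairwise marginals of p. -/
def DeltaAll (p : Ω₁ × Ω₂ × Ω₃ → ℝ) : Set (Ω₁ × Ω₂ × Ω₃ → ℝ) :=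
  {r | IsProb r ∧ m12 r = m12 p ∧ m13 r = m13 p ∧ m23 r = m23 p}

/-- Δ_{p_{12,y}}: couplings of the (x₁,x₂) marginal with the y marginal of p. -/
def DeltaCoup (p : Ω₁ × Ω₂ × Ω₃ → ℝ) : Set (Ω₁ × Ω₂ × Ω₃ → ℝ) :=
  {r | IsProb r ∧ m12 r = m12 p ∧ m3 r = m3 p}

/-- first marginal of a distribution on a product of two spaces -/
def mA {α β : Type*} [Fintype α] [Fintype β] (p : α × β → ℝ) : α → ℝ := fun a => ∑ b, p (a, b)

/-- second marginal of a distribution on a product of two spaces -/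
def mB {α β : Type*} [Fintype α] [Fintype β] (p : α × β → ℝ) : β → ℝ := fun b => ∑ a, p (a, b)

/-- mutual information of a joint distribution on a product of two spaces -/
def MI2 {α β : Type*} [Fintype α] [Fintype β] (p : α × β → ℝ) : ℝ := ent (mA p) + ent (mB p) - ent p
lemma convexOn_two_rpow : ConvexOn ℝ Set.univ fun t : ℝ => (2:ℝ) ^ t := by
  have h : (fun t : ℝ => (2:ℝ) ^ t) = (Real.exp ∘ fun t : ℝ => Real.log 2 * t) := by
    funext t; simp [Real.rpow_def_of_pos (by norm_num : (0:ℝ) < 2)]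
  rw [h]
  have := convexOn_exp.comp_affineMap (LinearMap.toAffineMap (LinearMap.mul ℝ ℝ (Real.log 2)))
  simp only [Set.preimage_univ] at this; exact this

lemma jensen2 {α : Type*} [Fintype α] (w t : α → ℝ) (h0 : ∀ a, 0 ≤ w a)
    (h1 : ∑ a, w a = 1) : (2:ℝ) ^ (∑ a, w a * t a) ≤ ∑ a, w a * (2:ℝ) ^ t a := by
  have := convexOn_two_rpow.map_sum_le (t := Finset.univ) (w := w) (p := t)
    (fun a _ => h0 a) h1 (fun a _ => Set.mem_univ _)
  simpa using this

/-- Feder–Merhav lower bound: the Bayes optimal accuracy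
E_x[max_y p(y|x)] = Σ_x max_y p(x,y) is at least 2^(I_p(X;Y) - H_p(Y)). -/
theorem feder_merhav_lower_bound [Nonempty Ω₃] (p : Ω₁ × Ω₃ → ℝ) (hp : IsProb p) :
    (2 : ℝ) ^ (MI2 p - ent (mB p)) ≤
      ∑ x : Ω₁, Finset.univ.sup' Finset.univ_nonempty (fun y : Ω₃ => p (x, y)) := by
  set M : Ω₁ → ℝ := fun x => Finset.univ.sup' Finset.univ_nonempty (fun y : Ω₃ => p (x, y))
    with hMdef
  set w : Ω₁ → ℝ := mA p with hwdef
  have hp0 := hp.1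
  have hw0 : ∀ x, 0 ≤ w x := fun x => Finset.sum_nonneg fun y _ => hp0 (x, y)
  have hw1 : ∑ x, w x = 1 := by
    rw [← hp.2, Fintype.sum_prod_type]; rfl
  have hpM : ∀ x y, p (x, y) ≤ M x := fun x y =>
    Finset.le_sup' (fun y : Ω₃ => p (x, y)) (Finset.mem_univ y)
  have hM0 : ∀ x, 0 ≤ M x := fun x => le_trans (hp0 (x, Classical.arbitrary Ω₃)) (hpM x _)
  have hMpos : ∀ x, 0 < w x → 0 < M x := by
    intro x hwx
    by_contra h
    push_neg at h
    have : ∀ y, p (x, y) = 0 := fun y => le_antisymm (le_trans (hpM x y) h) (hp0 (x, y))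
    have : w x = 0 := Finset.sum_eq_zero fun y _ => this y
    linarith
  set t : Ω₁ → ℝ := fun x => Real.logb 2 (M x) - Real.logb 2 (w x) with htdef
  -- exponent rewriting
  have hexp : MI2 p - ent (mB p) = ent (mA p) - ent p := by unfold MI2; ring
  -- step C
  have hC : ent (mA p) - ent p ≤ ∑ x, w x * t x := by
    have hentp : ent p = -∑ x, ∑ y, p (x, y) * Real.logb 2 (p (x, y)) := by
      unfold ent; rw [Fintype.sum_prod_type]
    have hentA : ent (mA p) = -∑ x, ∑ y, p (x, y) * Real.logb 2 (w x) := by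
      unfold ent
      congr 1
      refine Finset.sum_congr rfl fun x _ => ?_
      rw [← Finset.sum_mul]; rfl
    rw [hentp, hentA]
    have key : ∀ x, ∑ y, p (x, y) * Real.logb 2 (p (x, y))
        - ∑ y, p (x, y) * Real.logb 2 (w x) ≤ w x * t x := by
      intro x
      have : ∑ y, (p (x, y) * Real.logb 2 (p (x, y)) - p (x, y) * Real.logb 2 (w x))
          ≤ ∑ y, p (x, y) * t x := by
        refine Finset.sum_le_sum fun y _ => ?_
        rcases eq_or_lt_of_le (hp0 (x, y)) with h0 | hpos
        · simp [← h0]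
        · have hle : Real.logb 2 (p (x, y)) ≤ Real.logb 2 (M x) :=
            Real.logb_le_logb_of_le one_lt_two hpos (hpM x y)
          rw [← mul_sub]
          exact mul_le_mul_of_nonneg_left (by rw [htdef]; exact sub_le_sub_right hle _)
            (hp0 (x, y))
      calc ∑ y, p (x, y) * Real.logb 2 (p (x, y)) - ∑ y, p (x, y) * Real.logb 2 (w x)
          = ∑ y, (p (x, y) * Real.logb 2 (p (x, y)) - p (x, y) * Real.logb 2 (w x)) := by
            rw [Finset.sum_sub_distrib]
        _ ≤ ∑ y, p (x, y) * t x := this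
        _ = w x * t x := by rw [← Finset.sum_mul]; rfl
    calc -∑ x, ∑ y, p (x, y) * Real.logb 2 (w x) - -∑ x, ∑ y, p (x, y) * Real.logb 2 (p (x, y))
        = ∑ x, (∑ y, p (x, y) * Real.logb 2 (p (x, y)) - ∑ y, p (x, y) * Real.logb 2 (w x)) := by
          rw [Finset.sum_sub_distrib]; ring
      _ ≤ ∑ x, w x * t x := Finset.sum_le_sum fun x _ => key x
  -- step E
  have hE : ∑ x, w x * (2:ℝ) ^ t x ≤ ∑ x, M x := by
    refine Finset.sum_le_sum fun x _ => ?_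
    rcases eq_or_lt_of_le (hw0 x) with h0 | hpos
    · rw [← h0]; simpa using hM0 x
    · have h2 : (2:ℝ) ^ t x = M x / w x := by
        rw [htdef]
        rw [Real.rpow_sub (by norm_num : (0:ℝ) < 2),
          Real.rpow_logb (by norm_num) (by norm_num) (hMpos x hpos),
          Real.rpow_logb (by norm_num) (by norm_num) hpos]
      rw [h2, mul_div_cancel₀ _ (ne_of_gt hpos)]
  calc (2:ℝ) ^ (MI2 p - ent (mB p)) = (2:ℝ) ^ (ent (mA p) - ent p) := by rw [hexp]
    _ ≤ (2:ℝ) ^ (∑ x, w x * t x) := Real.rpow_le_rpow_of_exponent_le one_le_two hC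
    _ ≤ ∑ x, w x * (2:ℝ) ^ t x := jensen2 w t hw0 hw1
    _ ≤ ∑ x, M x := hE

end PaperPID
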